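/- Let γ > 0 and let φ : [0,∞) → ℝ be strictly increasing and convex. Then the functional q ↦ φ(‖q‖_{1+γ}) is strictly convex on probability densities: for every t ∈ (0,1) and all probability densities p, q with ‖p‖_{1+γ} < ∞, ‖q‖_{1+γ} < ∞ that are not equal ν-almost everywhere, φ(‖t·q + (1−t)·p‖_{1+γ}) < t·φ(‖q‖_{1+γ}) + (1−t)·φ(‖p‖_{1+γ}). -/

import Mathlib

open MeasureTheory Filter Real Topology Set

/-- A probability density w.r.t. a measure `ν`: measurable, nonnegative, integrating to 1. -/
def IsProbDensity {X : Type*} [MeasurableSpace X] (ν : Measure X) (p : X → ℝ) : Prop :=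
  Measurable p ∧ (∀ x, 0 ≤ p x) ∧ ∫ x, p x ∂ν = 1

/-- `⟨f^{1+γ}⟩ = ∫ f(x)^{1+γ} dν`. -/
noncomputable def powInt {X : Type*} [MeasurableSpace X] (ν : Measure X) (γ : ℝ) (p : X → ℝ) : ℝ :=
  ∫ x, p x ^ (1 + γ) ∂ν

/-- `‖f‖_{1+γ} = ⟨f^{1+γ}⟩^{1/(1+γ)}`. -/
noncomputable def lnorm {X : Type*} [MeasurableSpace X] (ν : Measure X) (γ : ℝ) (p : X → ℝ) : ℝ :=
  (powInt ν γ p) ^ (1 / (1 + γ))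

lemma integral_lt_integral_of_ae_le' {X : Type*} [MeasurableSpace X] {ν : Measure X}
    {f g : X → ℝ} (hf : Integrable f ν) (hg : Integrable g ν)
    (hle : f ≤ᵐ[ν] g) (hne : ¬ f =ᵐ[ν] g) : ∫ x, f x ∂ν < ∫ x, g x ∂ν := by
  rcases lt_or_eq_of_le (integral_mono_ae hf hg hle) with h | h
  · exact h
  exfalso
  have h0 : ∫ x, (g x - f x) ∂ν = 0 := by rw [integral_sub hg hf]; linarith
  have hpos : 0 ≤ᵐ[ν] fun x => g x - f x := hle.mono fun x hx => by simpa using sub_nonneg.2 hx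
  have hz := (integral_eq_zero_iff_of_nonneg_ae hpos (hg.sub hf)).1 h0
  exact hne <| hz.mono fun x hx => by
    have : g x - f x = 0 := hx
    linarith


/-- for φ strictly increasing and convex on `[0,∞)`, the functional
`q ↦ φ(‖q‖_{1+γ})` is strictly convex on probability densities. -/
theorem phi_lnorm_strictly_convex {X : Type*} [MeasurableSpace X] (ν : Measure X) [SigmaFinite ν]
    (γ : ℝ) (hγ : 0 < γ)
    (φ : ℝ → ℝ) (hφmono : StrictMonoOn φ (Set.Ici 0)) (hφconv : ConvexOn ℝ (Set.Ici 0) φ)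
    (t : ℝ) (ht0 : 0 < t) (ht1 : t < 1)
    (p q : X → ℝ) (hp : IsProbDensity ν p) (hq : IsProbDensity ν q)
    (hpI : Integrable (fun x => p x ^ (1 + γ)) ν)
    (hqI : Integrable (fun x => q x ^ (1 + γ)) ν)
    (hne : ¬ q =ᵐ[ν] p) :
    φ (lnorm ν γ (fun x => t * q x + (1 - t) * p x)) <
      t * φ (lnorm ν γ q) + (1 - t) * φ (lnorm ν γ p) := by
  obtain ⟨hqm, hq0, hq1⟩ := hq
  obtain ⟨hpm, hp0, hp1⟩ := hp
  set r : ℝ := 1 + γ with hr_def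
  have hr1 : 1 < r := by simp only [hr_def]; linarith
  have hr0 : (0:ℝ) < r := by linarith
  have hrne : r ≠ 0 := ne_of_gt hr0
  -- positivity of powInt for densities
  have hint_pos : ∀ (f : X → ℝ), (∀ x, 0 ≤ f x) →
      Integrable (fun x => f x ^ r) ν → (∫ x, f x ∂ν) = 1 → 0 < powInt ν γ f := by
    intro f h0 hI h1
    have hnn : 0 ≤ᵐ[ν] fun x => f x ^ r := ae_of_all _ fun x => Real.rpow_nonneg (h0 x) r
    rcases lt_or_eq_of_le (integral_nonneg (f := fun x => f x ^ r) fun x => Real.rpow_nonneg (h0 x) r) with h | h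
    · exact h
    exfalso
    have h0' := (integral_eq_zero_iff_of_nonneg_ae hnn hI).1 h.symm
    have hz : f =ᵐ[ν] 0 := h0'.mono fun x hx => by
      have hx' : f x ^ r = 0 := hx
      by_contra hfx
      have : 0 < f x := lt_of_le_of_ne (h0 x) (Ne.symm hfx)
      exact absurd hx' (ne_of_gt (Real.rpow_pos_of_pos this r))
    have hzero : (∫ x, f x ∂ν) = 0 := by
      rw [integral_congr_ae hz]; simp
    rw [h1] at hzero; norm_num at hzero
  have hIq : 0 < powInt ν γ q := hint_pos q hq0 hqI hq1
  have hIp : 0 < powInt ν γ p := hint_pos p hp0 hpI hp1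
  set Nq : ℝ := lnorm ν γ q with hNq_def
  set Np : ℝ := lnorm ν γ p with hNp_def
  have hNq : 0 < Nq := Real.rpow_pos_of_pos hIq _
  have hNp : 0 < Np := Real.rpow_pos_of_pos hIp _
  have hNq_r : Nq ^ r = powInt ν γ q := by
    rw [hNq_def, lnorm, ← hr_def, ← Real.rpow_mul hIq.le, one_div_mul_cancel hrne,
      Real.rpow_one]
  have hNp_r : Np ^ r = powInt ν γ p := by
    rw [hNp_def, lnorm, ← hr_def, ← Real.rpow_mul hIp.le, one_div_mul_cancel hrne,
      Real.rpow_one]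
  have hpowq : powInt ν γ q = ∫ x, q x ^ r ∂ν := by rw [powInt, ← hr_def]
  have hpowp : powInt ν γ p = ∫ x, p x ^ r ∂ν := by rw [powInt, ← hr_def]
  set S : ℝ := t * Nq + (1 - t) * Np with hS_def
  have ht1' : (0:ℝ) < 1 - t := by linarith
  have hS : 0 < S := by
    have := mul_pos ht0 hNq; have := mul_pos ht1' hNp; simp only [hS_def]; linarith
  set lam : ℝ := t * Nq / S with hlam_def
  have hlam0 : 0 < lam := div_pos (mul_pos ht0 hNq) hS
  have hlam1 : lam < 1 := by
    rw [hlam_def, div_lt_one hS, hS_def]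
    nlinarith [mul_pos ht1' hNp]
  have hlam' : 1 - lam = (1 - t) * Np / S := by
    rw [hlam_def, eq_div_iff (ne_of_gt hS)]
    field_simp [ne_of_gt hS]
    ring
  set qt : X → ℝ := fun x => q x / Nq with hqt_def
  set pt : X → ℝ := fun x => p x / Np with hpt_def
  have hqt0 : ∀ x, 0 ≤ qt x := fun x => div_nonneg (hq0 x) hNq.le
  have hpt0 : ∀ x, 0 ≤ pt x := fun x => div_nonneg (hp0 x) hNp.le
  have hqt_pow : ∀ x, qt x ^ r = q x ^ r / Nq ^ r := fun x => Real.div_rpow (hq0 x) hNq.le r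
  have hpt_pow : ∀ x, pt x ^ r = p x ^ r / Np ^ r := fun x => Real.div_rpow (hp0 x) hNp.le r
  have hqtI : Integrable (fun x => qt x ^ r) ν := by
    simp only [hqt_pow]; exact hqI.div_const _
  have hptI : Integrable (fun x => pt x ^ r) ν := by
    simp only [hpt_pow]; exact hpI.div_const _
  have hFqt : ∫ x, qt x ^ r ∂ν = 1 := by
    simp only [hqt_pow, integral_div, ← hpowq, hNq_r]
    exact div_self (ne_of_gt hIq)
  have hFpt : ∫ x, pt x ^ r ∂ν = 1 := by
    simp only [hpt_pow, integral_div, ← hpowp, hNp_r]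
    exact div_self (ne_of_gt hIp)
  -- the normalized densities differ on a non-null set
  have hne_t : ¬ qt =ᵐ[ν] pt := by
    intro h
    have hc : q =ᵐ[ν] fun x => (Nq / Np) * p x := h.mono fun x hx => by
      have hx' : q x / Nq = p x / Np := hx
      field_simp [ne_of_gt hNq, ne_of_gt hNp] at hx' ⊢
      linarith [hx']
    have hcint : (∫ x, q x ∂ν) = (Nq / Np) * ∫ x, p x ∂ν := by
      rw [integral_congr_ae hc, integral_const_mul]
    rw [hq1, hp1, mul_one] at hcint
    have hNqNp : Nq = Np := by
      field_simp [ne_of_gt hNp] at hcint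
      linarith
    exact hne (hc.mono fun x hx => by simp only [hx, hNqNp, div_self (ne_of_gt hNp), one_mul])
  -- the mixture
  set m : X → ℝ := fun x => t * q x + (1 - t) * p x with hm_def
  have hm0 : ∀ x, 0 ≤ m x := fun x =>
    add_nonneg (mul_nonneg ht0.le (hq0 x)) (mul_nonneg ht1'.le (hp0 x))
  have hkey : ∀ x, m x / S = lam * qt x + (1 - lam) * pt x := by
    intro x
    rw [hlam', hlam_def]
    simp only [hm_def, hqt_def, hpt_def]
    field_simp
  set u : X → ℝ := fun x => (lam * qt x + (1 - lam) * pt x) ^ r with hu_def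
  set g : X → ℝ := fun x => lam * qt x ^ r + (1 - lam) * pt x ^ r with hg_def
  have hle : ∀ x, u x ≤ g x := fun x => by
    have h := (convexOn_rpow hr1.le).2 (hqt0 x) (hpt0 x) hlam0.le
      (by linarith : (0:ℝ) ≤ 1 - lam) (by ring : lam + (1 - lam) = 1)
    simpa only [smul_eq_mul] using h
  have hu0 : ∀ x, 0 ≤ u x := fun x =>
    Real.rpow_nonneg (add_nonneg (mul_nonneg hlam0.le (hqt0 x))
      (mul_nonneg (by linarith) (hpt0 x))) r
  have hgI : Integrable g ν := (hqtI.const_mul lam).add (hptI.const_mul (1 - lam))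
  have hum : Measurable u :=
    (((hqm.div_const _).const_mul _).add ((hpm.div_const _).const_mul _)).pow measurable_const
  have huI : Integrable u ν :=
    hgI.mono' hum.aestronglyMeasurable
      (ae_of_all _ fun x => by rw [Real.norm_of_nonneg (hu0 x)]; exact hle x)
  have hne_u : ¬ u =ᵐ[ν] g := by
    intro h
    apply hne_t
    refine h.mono fun x hx => ?_
    by_contra hab
    have hlt := (strictConvexOn_rpow hr1).2 (hqt0 x) (hpt0 x) hab hlam0
      (by linarith : (0:ℝ) < 1 - lam) (by ring : lam + (1 - lam) = 1)
    simp only [smul_eq_mul] at hlt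
    have hx' : u x = g x := hx
    simp only [hu_def, hg_def] at hx'
    linarith
  have hint_u : ∫ x, u x ∂ν < 1 := by
    have hlt := integral_lt_integral_of_ae_le' huI hgI (ae_of_all _ hle) hne_u
    have hg_int : ∫ x, g x ∂ν = 1 := by
      simp only [hg_def]
      rw [integral_add (hqtI.const_mul lam) (hptI.const_mul (1 - lam)),
        integral_const_mul, integral_const_mul, hFqt, hFpt]
      ring
    linarith [hlt, hg_int.le]
  have hpm' : powInt ν γ m = S ^ r * ∫ x, u x ∂ν := by
    rw [powInt, ← hr_def, ← integral_const_mul]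
    congr 1
    funext x
    have h1 : m x = S * (m x / S) := by field_simp
    rw [h1, Real.mul_rpow hS.le (div_nonneg (hm0 x) hS.le), hkey x]
  have hIu0 : 0 ≤ ∫ x, u x ∂ν := integral_nonneg hu0
  have hpowm_lt : powInt ν γ m < S ^ r := by
    rw [hpm']
    calc S ^ r * ∫ x, u x ∂ν < S ^ r * 1 :=
          mul_lt_mul_of_pos_left hint_u (Real.rpow_pos_of_pos hS r)
      _ = S ^ r := mul_one _
  have hpowm0 : 0 ≤ powInt ν γ m := by
    rw [hpm']; exact mul_nonneg (Real.rpow_nonneg hS.le r) hIu0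
  have hm_norm_lt : lnorm ν γ m < S := by
    rw [lnorm, ← hr_def]
    calc (powInt ν γ m) ^ (1 / r) < (S ^ r) ^ (1 / r) :=
          Real.rpow_lt_rpow hpowm0 hpowm_lt (by positivity)
      _ = S := by
          rw [← Real.rpow_mul hS.le, mul_one_div_cancel hrne, Real.rpow_one]
  have hm_norm0 : 0 ≤ lnorm ν γ m := Real.rpow_nonneg (by rw [powInt, ← hr_def]; exact hpowm0) _
  calc φ (lnorm ν γ m) < φ S := hφmono (mem_Ici.2 hm_norm0) (mem_Ici.2 hS.le) hm_norm_lt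
    _ ≤ t * φ Nq + (1 - t) * φ Np := by
        have h := hφconv.2 (mem_Ici.2 hNq.le) (mem_Ici.2 hNp.le) ht0.le (by linarith)
          (by ring : t + (1 - t) = 1)
        simpa [smul_eq_mul, hS_def] using h
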